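/- If x ∈ ℝ² and rank(G_x) = 1 (i.e., x is a rational point), then orb(x) = {x' ∈ ℝ² : G_{x'} = G_x}. Equivalently, two rational points of ℝ² lie in the same 𝒢₂-orbit if and only if they have the same denominator. -/

import Mathlib

open scoped Matrix


/-- `y` is in the `GL(n,ℤ) ⋉ ℤⁿ`-orbit of `x`, i.e. `y = U x + t` for an integer
matrix `U` with `det U = ±1` and an integer vector `t`. -/
def SameOrbit (n : ℕ) (x y : Fin n → ℝ) : Prop :=
  ∃ (U : Matrix (Fin n) (Fin n) ℤ) (t : Fin n → ℤ),
    (U.det = 1 ∨ U.det = -1) ∧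
    ∀ i, y i = (∑ j, (U i j : ℝ) * x j) + (t i : ℝ)

/-- The subgroup `G_x = ℤ + ℤx₁ + ⋯ + ℤxₙ` of the additive reals. -/
def Gx {n : ℕ} (x : Fin n → ℝ) : AddSubgroup ℝ :=
  AddSubgroup.closure (insert (1 : ℝ) (Set.range x))

/-- A point of `ℝⁿ` is rational if all its coordinates are rational. -/
def IsRationalPoint {n : ℕ} (y : Fin n → ℝ) : Prop :=
  ∀ i, ∃ q : ℚ, y i = (q : ℝ)

/-- The denominator of a rational point: the least positive integer `d`
with `d • y ∈ ℤⁿ`. -/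
noncomputable def den {n : ℕ} (y : Fin n → ℝ) : ℕ :=
  sInf {d : ℕ | 0 < d ∧ ∀ i, ∃ m : ℤ, (d : ℝ) * y i = (m : ℝ)}

/-- The homogeneous correspondent `ỹ = den(y)·(y,1)`, viewed as a real vector. -/
noncomputable def tildeR {n : ℕ} (y : Fin n → ℝ) : Fin (n + 1) → ℝ :=
  fun i => (den y : ℝ) * (Fin.snoc y (1 : ℝ) : Fin (n + 1) → ℝ) i

/-- A rational `m`-simplex `conv(v₀,…,v_m) ⊆ ℝⁿ` is regular if the homogeneous
correspondents `ṽ₀,…,ṽ_m ∈ ℤ^{n+1}` can be extended to a ℤ-basis of `ℤ^{n+1}`. -/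
def IsRegularSimplex {n m : ℕ} (v : Fin (m + 1) → (Fin n → ℝ)) : Prop :=
  AffineIndependent ℝ v ∧ (∀ k, IsRationalPoint (v k)) ∧
  ∃ (b : Module.Basis (Fin (n + 1)) ℤ (Fin (n + 1) → ℤ)) (f : Fin (m + 1) ↪ Fin (n + 1)),
    ∀ k i, ((b (f k)) i : ℝ) = tildeR (v k) i

/-- A rational hyperplane in `ℝⁿ`. -/
def IsRatHyperplane {n : ℕ} (H : Set (Fin n → ℝ)) : Prop :=
  ∃ (h : Fin n → ℚ) (k : ℚ), h ≠ 0 ∧ H = {z | (∑ i, (h i : ℝ) * z i) = (k : ℝ)}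

/-- A rational affine space: an intersection of rational hyperplanes. -/
def IsRatAffineSpace {n : ℕ} (F : Set (Fin n → ℝ)) : Prop :=
  ∃ S : Set (Set (Fin n → ℝ)), (∀ H ∈ S, IsRatHyperplane H) ∧ F = ⋂₀ S

/-- `F_x`: the intersection of all rational hyperplanes containing `x`
(`= ℝⁿ` if there is no such hyperplane). -/
def Fx {n : ℕ} (x : Fin n → ℝ) : Set (Fin n → ℝ) :=
  ⋂₀ {H | IsRatHyperplane H ∧ x ∈ H}

/-- The (affine) dimension of a subset of `ℝⁿ`. -/
noncomputable def affDim {n : ℕ} (F : Set (Fin n → ℝ)) : ℕ :=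
  Module.finrank ℝ ↥(vectorSpan ℝ F)

/-- `d_F`: the least denominator of a rational point of `F`. -/
noncomputable def dF {n : ℕ} (F : Set (Fin n → ℝ)) : ℕ :=
  sInf {d : ℕ | ∃ y ∈ F, IsRationalPoint y ∧ den y = d}

/-- `c_F`: the smallest possible denominator of a vertex of a regular `n`-simplex
`conv(v₀,…,v_n) ⊆ ℝⁿ` with `v₀,…,v_e ∈ F`. -/
noncomputable def cF {n : ℕ} (e : ℕ) (F : Set (Fin n → ℝ)) : ℕ :=
  sInf {c : ℕ | ∃ (v : Fin (n + 1) → (Fin n → ℝ)) (i : Fin (n + 1)),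
    IsRegularSimplex v ∧ (∀ k : Fin (n + 1), (k : ℕ) ≤ e → v k ∈ F) ∧ den (v i) = c}

/-- `c_x = c_{F_x}`. -/
noncomputable def cx {n : ℕ} (x : Fin n → ℝ) : ℕ := cF (affDim (Fx x)) (Fx x)

/-- Membership in the Farey sequence `𝔉_d`. -/
def InFarey (d : ℕ) (x : ℚ) : Prop := 0 ≤ x ∧ x ≤ 1 ∧ x.den ≤ d

/-- `x` and `y` are neighbors (contiguous elements) of the Farey sequence `𝔉_d`. -/
def FareyNeighbor (d : ℕ) (x y : ℚ) : Prop :=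
  InFarey d x ∧ InFarey d y ∧ x ≠ y ∧
  ∀ t : ℚ, InFarey d t → ¬ (min x y < t ∧ t < max x y)

/-- `y` is the companion of `x`: `comp 0 = 1`, `comp 1 = 0`, `comp (1/2) = 1`, and
for denominator `d ≥ 3`, `comp x` is the neighbor of `x` in `𝔉_d` with smaller
denominator than the other neighbor. -/
def IsCompanion (x y : ℚ) : Prop :=
  (x = 0 ∧ y = 1) ∨ (x = 1 ∧ y = 0) ∨ (x = 1/2 ∧ y = 1) ∨
  (3 ≤ x.den ∧ FareyNeighbor x.den x y ∧
    ∀ z : ℚ, FareyNeighbor x.den x z → z ≠ y → y.den < z.den)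

-- basic membership
lemma one_mem_Gx {n : ℕ} (x : Fin n → ℝ) : (1:ℝ) ∈ Gx x :=
  AddSubgroup.subset_closure (Set.mem_insert _ _)

lemma coord_mem_Gx {n : ℕ} (x : Fin n → ℝ) (i : Fin n) : x i ∈ Gx x :=
  AddSubgroup.subset_closure (Set.mem_insert_iff.2 (Or.inr ⟨i, rfl⟩))

-- the denominator set
lemma denSet_nonempty {n : ℕ} {y : Fin n → ℝ} (hy : IsRationalPoint y) :
    {d : ℕ | 0 < d ∧ ∀ i, ∃ m : ℤ, (d : ℝ) * y i = (m : ℝ)}.Nonempty := by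
  classical
  choose q hq using hy
  refine ⟨∏ i, (q i).den, ?_, ?_⟩
  · exact Finset.prod_pos fun i _ => (q i).pos
  · intro i
    obtain ⟨k, hk⟩ : (q i).den ∣ ∏ j, (q j).den :=
      Finset.dvd_prod_of_mem _ (Finset.mem_univ i)
    refine ⟨k * (q i).num, ?_⟩
    rw [hq i, hk]
    push_cast
    rw [mul_comm ((q i).den : ℝ) k, mul_assoc]
    congr 1
    rw [mul_comm]
    exact_mod_cast congrArg (Rat.cast : ℚ → ℝ) (Rat.mul_den_eq_num (q i))

lemma den_mem {n : ℕ} {y : Fin n → ℝ} (hy : IsRationalPoint y) :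
    0 < den y ∧ ∀ i, ∃ m : ℤ, (den y : ℝ) * y i = (m : ℝ) :=
  Nat.sInf_mem (denSet_nonempty hy)

lemma den_pos {n : ℕ} {y : Fin n → ℝ} (hy : IsRationalPoint y) : 0 < den y :=
  (den_mem hy).1

lemma den_le {n : ℕ} {y : Fin n → ℝ} {d : ℕ} (hd : 0 < d)
    (h : ∀ i, ∃ m : ℤ, (d : ℝ) * y i = (m : ℝ)) : den y ≤ d :=
  Nat.sInf_le ⟨hd, h⟩

-- key arithmetic lemma: gcd of numerators with the denominator is 1 (n = 2 case)
lemma den_gcd_eq_one {y : Fin 2 → ℝ} (hy : IsRationalPoint y)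
    {a : Fin 2 → ℤ} (ha : ∀ i, (den y : ℝ) * y i = (a i : ℝ)) :
    Int.gcd (Int.gcd (a 0) (a 1)) (den y) = 1 := by
  set d := den y with hd
  have hdpos := den_pos hy
  set g : ℕ := Int.gcd (Int.gcd (a 0) (a 1)) (d : ℤ) with hg
  have hgd : (g : ℤ) ∣ (d : ℤ) := Int.gcd_dvd_right _ _
  have hga : ∀ i, (g : ℤ) ∣ a i := by
    intro i
    fin_cases i
    · exact dvd_trans (Int.gcd_dvd_left _ _) (Int.gcd_dvd_left _ _)
    · exact dvd_trans (Int.gcd_dvd_left _ _) (Int.gcd_dvd_right _ _)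
  have hgd' : g ∣ d := Int.ofNat_dvd.mp hgd
  have hgpos : 0 < g := Nat.pos_of_dvd_of_pos hgd' hdpos
  have hgR : (g : ℝ) ≠ 0 := by positivity
  have hle : d ≤ d / g := by
    refine den_le (Nat.div_pos (Nat.le_of_dvd hdpos hgd') hgpos) ?_
    intro i
    obtain ⟨b, hb⟩ := hga i
    refine ⟨b, ?_⟩
    have h1 : (g:ℝ) * (((d/g : ℕ):ℝ) * y i) = (g:ℝ) * (b:ℝ) := by
      rw [← mul_assoc, ← Nat.cast_mul g (d/g), Nat.mul_div_cancel' hgd', ha i, hb]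
      push_cast; ring
    exact mul_left_cancel₀ hgR h1
  have heq : d / g = d := le_antisymm (Nat.div_le_self d g) hle
  have h2 : d * g = d * 1 := by
    have := Nat.div_mul_cancel hgd'
    rw [heq] at this
    omega
  exact Nat.eq_of_mul_eq_mul_left hdpos h2

lemma Gx_eq_zmultiples {y : Fin 2 → ℝ} (hy : IsRationalPoint y) :
    Gx y = AddSubgroup.zmultiples ((den y : ℝ)⁻¹) := by
  classical
  have hdpos := den_pos hy
  have hdR : ((den y : ℕ) : ℝ) ≠ 0 := by positivity
  choose a ha using (den_mem hy).2
  apply le_antisymm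
  · rw [Gx, AddSubgroup.closure_le]
    rintro z (rfl | ⟨i, rfl⟩)
    · refine ⟨(den y : ℤ), ?_⟩
      simp only [zsmul_eq_mul]
      push_cast
      field_simp
    · refine ⟨a i, ?_⟩
      simp only [zsmul_eq_mul]
      push_cast
      field_simp
      linear_combination -ha i
  · rw [AddSubgroup.zmultiples_le]
    -- 1/d = c0 y0 + c1 y1 + c·1 from Bezout
    obtain ⟨c0, c1, c, hc⟩ : ∃ c0 c1 c : ℤ,
        c0 * a 0 + c1 * a 1 + c * (den y : ℤ) = 1 := by
      have h1 := Int.gcd_eq_gcd_ab (Int.gcd (a 0) (a 1) : ℤ) (den y : ℤ)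
      have h2 := Int.gcd_eq_gcd_ab (a 0) (a 1)
      have h3 : (1 : ℤ) = (Int.gcd (Int.gcd (a 0) (a 1)) (den y) : ℤ) := by
        rw [den_gcd_eq_one hy ha]; simp
      refine ⟨(a 0).gcdA (a 1) * ((Int.gcd (a 0) (a 1) : ℤ).gcdA (den y : ℤ)),
        (a 0).gcdB (a 1) * ((Int.gcd (a 0) (a 1) : ℤ).gcdA (den y : ℤ)),
        ((Int.gcd (a 0) (a 1) : ℤ).gcdB (den y : ℤ)), ?_⟩
      rw [h3, h1]
      push_cast [h2]
      ring
    have hmem : c0 • y 0 + c1 • y 1 + c • (1:ℝ) ∈ Gx y := by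
      exact AddSubgroup.add_mem _ (AddSubgroup.add_mem _
        (AddSubgroup.zsmul_mem _ (coord_mem_Gx y 0) _)
        (AddSubgroup.zsmul_mem _ (coord_mem_Gx y 1) _))
        (AddSubgroup.zsmul_mem _ (one_mem_Gx y) _)
    have hval : c0 • y 0 + c1 • y 1 + c • (1:ℝ) = ((den y : ℝ))⁻¹ := by
      have hcR : (c0:ℝ) * (a 0 : ℝ) + (c1:ℝ) * (a 1 : ℝ) + (c:ℝ) * (den y : ℝ) = 1 := by
        exact_mod_cast congrArg (Int.cast : ℤ → ℝ) hc
      simp only [zsmul_eq_mul]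
      rw [inv_eq_one_div, eq_div_iff hdR]
      linear_combination (c0:ℝ) * ha 0 + (c1:ℝ) * ha 1 + hcR
    rwa [hval] at hmem

lemma zmultiples_inv_inj {d d' : ℕ} (hd : 0 < d) (hd' : 0 < d')
    (h : AddSubgroup.zmultiples ((d : ℝ)⁻¹) = AddSubgroup.zmultiples ((d' : ℝ)⁻¹)) :
    d = d' := by
  have hdR : (d : ℝ) ≠ 0 := by positivity
  have hd'R : (d' : ℝ) ≠ 0 := by positivity
  have h1 : ((d' : ℝ))⁻¹ ∈ AddSubgroup.zmultiples ((d : ℝ)⁻¹) := by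
    rw [h]; exact AddSubgroup.mem_zmultiples _
  have h2 : ((d : ℝ))⁻¹ ∈ AddSubgroup.zmultiples ((d' : ℝ)⁻¹) := by
    rw [← h]; exact AddSubgroup.mem_zmultiples _
  obtain ⟨m, hm⟩ := h1
  obtain ⟨m', hm'⟩ := h2
  simp only [zsmul_eq_mul] at hm hm'
  have e1 : (m : ℝ) * (d' : ℝ) = (d : ℝ) := by
    field_simp at hm
    linarith
  have e2 : (m' : ℝ) * (d : ℝ) = (d' : ℝ) := by
    field_simp at hm'
    linarith
  have e1' : m * (d' : ℤ) = (d : ℤ) := by exact_mod_cast e1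
  have e2' : m' * (d : ℤ) = (d' : ℤ) := by exact_mod_cast e2
  have : (d : ℤ) ∣ (d' : ℤ) := ⟨m', by linarith [e2']⟩
  have h2' : (d' : ℤ) ∣ (d : ℤ) := ⟨m, by linarith [e1']⟩
  have := Int.dvd_antisymm (by positivity) (by positivity) this h2'
  exact_mod_cast this

lemma den_eq_of_Gx_eq {y y' : Fin 2 → ℝ} (hy : IsRationalPoint y)
    (hy' : IsRationalPoint y') (h : Gx y = Gx y') : den y = den y' :=
  zmultiples_inv_inj (den_pos hy) (den_pos hy')
    (by rw [← Gx_eq_zmultiples hy, ← Gx_eq_zmultiples hy', h])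

lemma isRationalPoint_of_Gx_eq {x x' : Fin 2 → ℝ} (hx : IsRationalPoint x)
    (h : Gx x' = Gx x) : IsRationalPoint x' := by
  intro i
  have hmem : x' i ∈ Gx x' := coord_mem_Gx x' i
  rw [h, Gx_eq_zmultiples hx] at hmem
  obtain ⟨m, hm⟩ := hmem
  exact ⟨m / (den x : ℚ), by rw [← hm]; push_cast; rw [zsmul_eq_mul, div_eq_mul_inv]⟩

lemma sameOrbit_iff' {n : ℕ} (x y : Fin n → ℝ) :
    SameOrbit n x y ↔ ∃ (U : Matrix (Fin n) (Fin n) ℤ) (t : Fin n → ℤ),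
      (U.det = 1 ∨ U.det = -1) ∧
      y = (U.map (Int.cast : ℤ → ℝ)) *ᵥ x + (fun i => (t i : ℝ)) := by
  constructor
  · rintro ⟨U, t, hdet, h⟩
    refine ⟨U, t, hdet, funext fun i => ?_⟩
    simp [Matrix.mulVec, dotProduct, Matrix.map_apply, h i]
  · rintro ⟨U, t, hdet, h⟩
    refine ⟨U, t, hdet, fun i => ?_⟩
    rw [h]
    simp [Matrix.mulVec, dotProduct, Matrix.map_apply]

lemma sameOrbit_refl {n : ℕ} (x : Fin n → ℝ) : SameOrbit n x x := by
  rw [sameOrbit_iff']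
  exact ⟨1, 0, Or.inl (Matrix.det_one), by funext i; simp⟩

lemma sameOrbit_trans {n : ℕ} {x y z : Fin n → ℝ}
    (h1 : SameOrbit n x y) (h2 : SameOrbit n y z) : SameOrbit n x z := by
  rw [sameOrbit_iff'] at *
  obtain ⟨U, t, hU, hy⟩ := h1
  obtain ⟨V, s, hV, hz⟩ := h2
  refine ⟨V * U, V *ᵥ t + s, ?_, ?_⟩
  · rw [Matrix.det_mul]
    rcases hV with h | h <;> rcases hU with h' | h' <;> simp [h, h'] <;> norm_num
  · rw [hz, hy]
    have hmap : (V * U).map (Int.cast : ℤ → ℝ) =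
        V.map (Int.cast : ℤ → ℝ) * U.map (Int.cast : ℤ → ℝ) :=
      Matrix.map_mul (f := Int.castRingHom ℝ)
    have hvec : (fun i => (((V *ᵥ t + s) i : ℤ) : ℝ)) =
        V.map (Int.cast : ℤ → ℝ) *ᵥ (fun i => (t i : ℝ)) + fun i => (s i : ℝ) := by
      funext i
      simp [Matrix.mulVec, dotProduct, Matrix.map_apply]
    rw [hmap, hvec, Matrix.mulVec_add, ← Matrix.mulVec_mulVec]
    abel

lemma sameOrbit_symm {n : ℕ} {x y : Fin n → ℝ} (h : SameOrbit n x y) :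
    SameOrbit n y x := by
  rw [sameOrbit_iff'] at *
  obtain ⟨U, t, hU, hy⟩ := h
  have hunit : IsUnit U.det := by
    rcases hU with h | h <;> rw [h]
    · exact isUnit_one
    · exact isUnit_one.neg
  have hinv : U⁻¹ * U = 1 := Matrix.nonsing_inv_mul U hunit
  refine ⟨U⁻¹, -(U⁻¹ *ᵥ t), ?_, ?_⟩
  · have hdet : U⁻¹.det * U.det = 1 := by rw [← Matrix.det_mul, hinv, Matrix.det_one]
    rcases hU with h | h
    · left; rw [h, mul_one] at hdet; exact hdet
    · right; rw [h] at hdet; omega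
  · have hmap : (U⁻¹).map (Int.cast : ℤ → ℝ) * U.map (Int.cast : ℤ → ℝ) = 1 := by
      have h2 : ((U⁻¹ * U).map (Int.cast : ℤ → ℝ)) =
          (U⁻¹).map (Int.cast : ℤ → ℝ) * U.map (Int.cast : ℤ → ℝ) :=
        Matrix.map_mul (f := Int.castRingHom ℝ)
      rw [← h2, hinv]
      simp
    have hvec : (fun i => (((-(U⁻¹ *ᵥ t)) i : ℤ) : ℝ)) =
        -((U⁻¹).map (Int.cast : ℤ → ℝ) *ᵥ (fun i => (t i : ℝ))) := by
      funext i
      simp [Matrix.mulVec, dotProduct, Matrix.map_apply]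
    rw [hy, hvec, Matrix.mulVec_add, Matrix.mulVec_mulVec, hmap]
    simp

lemma Gx_le_of_orbit {n : ℕ} {x y : Fin n → ℝ} (h : SameOrbit n x y) :
    Gx y ≤ Gx x := by
  obtain ⟨U, t, _, hy⟩ := h
  rw [Gx, AddSubgroup.closure_le]
  rintro z (rfl | ⟨i, rfl⟩)
  · exact one_mem_Gx x
  · rw [hy i]
    refine AddSubgroup.add_mem _ ?_ ?_
    · refine AddSubgroup.sum_mem _ fun j _ => ?_
      have : (U i j : ℝ) * x j = (U i j) • x j := (zsmul_eq_mul _ _).symm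
      rw [this]
      exact AddSubgroup.zsmul_mem _ (coord_mem_Gx x j) _
    · have : ((t i : ℤ) : ℝ) = (t i) • (1:ℝ) := by simp
      rw [this]
      exact AddSubgroup.zsmul_mem _ (one_mem_Gx x) _

lemma Gx_eq_of_orbit {n : ℕ} {x y : Fin n → ℝ} (h : SameOrbit n x y) :
    Gx y = Gx x :=
  le_antisymm (Gx_le_of_orbit h) (Gx_le_of_orbit (sameOrbit_symm h))

lemma orbit_step1 {y : Fin 2 → ℝ} (hy : IsRationalPoint y) :
    ∃ g : ℤ, Int.gcd g (den y) = 1 ∧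
      SameOrbit 2 y ![(g : ℝ) / (den y : ℝ), 0] := by
  obtain ⟨hdpos, hint⟩ := den_mem hy
  choose a ha using hint
  have hdR : ((den y : ℕ) : ℝ) ≠ 0 := by positivity
  set g : ℤ := (Int.gcd (a 0) (a 1) : ℤ) with hgdef
  have hgcd : Int.gcd g (den y) = 1 := by
    have := den_gcd_eq_one hy ha
    simpa [hgdef] using this
  refine ⟨g, hgcd, ?_⟩
  by_cases hg : g = 0
  · have ha0 : a 0 = 0 ∧ a 1 = 0 := by
      constructor <;> [have := Int.gcd_dvd_left (a := a 0) (b := a 1);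
        have := Int.gcd_dvd_right (a := a 0) (b := a 1)] <;>
      · rw [← hgdef, hg] at this
        exact zero_dvd_iff.mp this
    have hy0 : ∀ i, y i = 0 := by
      intro i
      have hai : a i = 0 := by fin_cases i <;> simp [ha0.1, ha0.2]
      have h := ha i
      rw [hai] at h
      push_cast at h
      exact (mul_eq_zero.mp h).resolve_left hdR
    have : ![(g : ℝ) / (den y : ℝ), 0] = y := by
      funext i
      fin_cases i <;> simp [hg, hy0 0, hy0 1]
    rw [this]
    exact sameOrbit_refl y
  · have hgR : (g : ℝ) ≠ 0 := by exact_mod_cast hg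
    have hbez : a 0 * (a 0).gcdA (a 1) + a 1 * (a 0).gcdB (a 1) = g :=
      (Int.gcd_eq_gcd_ab (a 0) (a 1)).symm
    obtain ⟨b0, hb0⟩ : g ∣ a 0 := Int.gcd_dvd_left _ _
    obtain ⟨b1, hb1⟩ : g ∣ a 1 := Int.gcd_dvd_right _ _
    set p := (a 0).gcdA (a 1)
    set q := (a 0).gcdB (a 1)
    refine ⟨!![p, q; -b1, b0], 0, ?_, ?_⟩
    · left
      rw [Matrix.det_fin_two_of]
      have h2 : g * (p * b0 - q * -b1) = g * 1 := by
        rw [hb0, hb1] at hbez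
        linear_combination hbez
      exact mul_left_cancel₀ hg h2
    · have key0 : (g : ℝ) / (den y : ℝ) = (p : ℝ) * y 0 + (q : ℝ) * y 1 := by
        rw [div_eq_iff hdR, eq_comm]
        have e : ((p : ℝ) * y 0 + (q : ℝ) * y 1) * (den y : ℝ)
            = (p : ℝ) * ((den y : ℝ) * y 0) + (q : ℝ) * ((den y : ℝ) * y 1) := by ring
        rw [e, ha 0, ha 1]
        have := congrArg (Int.cast : ℤ → ℝ) hbez
        push_cast at this ⊢
        linarith [this]
      have key1 : (0 : ℝ) = (-b1 : ℝ) * y 0 + (b0 : ℝ) * y 1 := by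
        have e : ((-b1 : ℝ) * y 0 + (b0 : ℝ) * y 1) * (den y : ℝ)
            = (-b1 : ℝ) * ((den y : ℝ) * y 0) + (b0 : ℝ) * ((den y : ℝ) * y 1) := by ring
        have h0 : ((-b1 : ℝ) * y 0 + (b0 : ℝ) * y 1) * (den y : ℝ) = 0 := by
          rw [e, ha 0, ha 1, hb0, hb1]
          push_cast
          ring
        rcases mul_eq_zero.mp h0 with h | h
        · rw [eq_comm]; exact h
        · exact absurd h hdR
      intro i
      fin_cases i
      · simpa [Fin.sum_univ_two] using key0
      · simpa [Fin.sum_univ_two] using key1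

lemma orbit_step2 {g : ℤ} {d : ℕ} (hd : 0 < d) (hgcd : Int.gcd g d = 1) :
    SameOrbit 2 ![(g : ℝ) / (d : ℝ), 0] ![((d : ℝ))⁻¹, 0] := by
  have hdR : ((d : ℕ) : ℝ) ≠ 0 := by positivity
  set u := g.gcdA d
  set k := g.gcdB d
  have hbez : g * u + (d : ℤ) * k = 1 := by
    have := Int.gcd_eq_gcd_ab g (d : ℤ)
    rw [hgcd] at this
    exact_mod_cast this.symm
  have hud : Int.gcd u (d : ℤ) = 1 := by
    have h1 : (Int.gcd u (d : ℤ) : ℤ) ∣ 1 := by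
      rw [← hbez]
      exact dvd_add (Dvd.dvd.mul_left (Int.gcd_dvd_left _ _) g)
        (Dvd.dvd.mul_right (Int.gcd_dvd_right _ _) k)
    have := Int.eq_one_of_dvd_one (by positivity) h1
    exact_mod_cast this
  set α := u.gcdA d
  set β := u.gcdB d
  have hbez2 : u * α + (d : ℤ) * β = 1 := by
    have := Int.gcd_eq_gcd_ab u (d : ℤ)
    rw [hud] at this
    exact_mod_cast this.symm
  refine ⟨!![u, -β; (d : ℤ), α], ![k, -g], ?_, ?_⟩
  · left
    rw [Matrix.det_fin_two_of]
    linear_combination hbez2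
  · have key0 : ((d : ℝ))⁻¹ = (u : ℝ) * ((g : ℝ) / d) + (-β : ℝ) * 0 + (k : ℝ) := by
      rw [inv_eq_one_div]
      field_simp
      have := congrArg (Int.cast : ℤ → ℝ) hbez
      push_cast at this
      linarith
    have key1 : (0 : ℝ) = (d : ℝ) * ((g : ℝ) / d) + (α : ℝ) * 0 + (-g : ℝ) := by
      field_simp
      ring
    intro i
    fin_cases i
    · simpa [Fin.sum_univ_two] using key0
    · simpa [Fin.sum_univ_two] using key1

lemma orbit_to_canonical {y : Fin 2 → ℝ} (hy : IsRationalPoint y) :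
    SameOrbit 2 y ![((den y : ℝ))⁻¹, 0] := by
  obtain ⟨g, hgcd, h1⟩ := orbit_step1 hy
  exact sameOrbit_trans h1 (orbit_step2 (den_pos hy) hgcd)

lemma sameOrbit_of_den_eq {y y' : Fin 2 → ℝ} (hy : IsRationalPoint y)
    (hy' : IsRationalPoint y') (h : den y = den y') : SameOrbit 2 y y' := by
  have h1 := orbit_to_canonical hy
  have h2 := orbit_to_canonical hy'
  rw [h] at h1
  exact sameOrbit_trans h1 (sameOrbit_symm h2)

lemma rational_of_rank_one {x : Fin 2 → ℝ} (hx : Module.finrank ℤ ↥(Gx x) = 1) :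
    IsRationalPoint x := by
  by_contra hirr
  rw [IsRationalPoint] at hirr
  push_neg at hirr
  obtain ⟨i, hi⟩ := hirr
  -- the pair (1, x i) is ℤ-linearly independent in Gx x
  set v : Fin 2 → ↥(Gx x) := ![⟨1, one_mem_Gx x⟩, ⟨x i, coord_mem_Gx x i⟩] with hv
  have hcomp : ((Gx x).subtype.toIntLinearMap : ↥(Gx x) →ₗ[ℤ] ℝ) ∘ v
      = ![(1 : ℝ), x i] := by
    funext j
    fin_cases j <;> rfl
  have hli : LinearIndependent ℤ (![(1 : ℝ), x i]) := by
    rw [LinearIndependent.pair_iff]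
    intro s t hst
    simp only [zsmul_eq_mul, mul_one] at hst
    by_cases ht : t = 0
    · subst ht
      constructor
      · exact_mod_cast by simpa using hst
      · rfl
    · exfalso
      have htR : (t : ℝ) ≠ 0 := Int.cast_ne_zero.mpr ht
      have : x i = ((-s : ℤ) : ℝ) / ((t : ℤ) : ℝ) := by
        field_simp
        push_cast
        linarith
      exact hi ((-s : ℚ) / (t : ℚ)) (by rw [this]; push_cast; ring)
  have hliv : LinearIndependent ℤ v := by
    apply LinearIndependent.of_comp ((Gx x).subtype.toIntLinearMap)
    rw [hcomp]
    exact hli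
  have h2 : (2 : Cardinal) ≤ Module.rank ℤ ↥(Gx x) := by
    simpa using hliv.cardinal_le_rank
  have h1 : Module.rank ℤ ↥(Gx x) = 1 := by
    have := hx
    rw [Module.finrank] at this
    exact Cardinal.toNat_eq_one.mp this
  rw [h1] at h2
  norm_num at h2


/-- If `x ∈ ℝ²` and `rank G_x = 1` (i.e. `x` is a rational point),
then `orb(x) = {x' : G_{x'} = G_x}`; equivalently, two rational points of `ℝ²` lie
in the same `𝒢₂`-orbit iff they have the same denominator. -/
theorem orbit_eq_of_rank_one (x : Fin 2 → ℝ) (hx : Module.finrank ℤ ↥(Gx x) = 1) :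
    ({y | SameOrbit 2 x y} = {x' | Gx x' = Gx x}) ∧
    (∀ y y' : Fin 2 → ℝ, IsRationalPoint y → IsRationalPoint y' →
      (SameOrbit 2 y y' ↔ den y = den y')) := by
  have hxr : IsRationalPoint x := rational_of_rank_one hx
  constructor
  · ext x'
    simp only [Set.mem_setOf_eq]
    constructor
    · exact fun h => Gx_eq_of_orbit h
    · intro h
      have hx'r : IsRationalPoint x' := isRationalPoint_of_Gx_eq hxr h
      exact sameOrbit_of_den_eq hxr hx'r (den_eq_of_Gx_eq hxr hx'r h.symm)
  · intro y y' hy hy'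
    constructor
    · intro h
      exact den_eq_of_Gx_eq hy hy' (Gx_eq_of_orbit h).symm
    · exact sameOrbit_of_den_eq hy hy'
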